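/- arXiv:1904.11854 — 3 statements merged into one kernel-verified Lean document; each statement's English description precedes it below -/
import Mathlib

section
/- Let A be a bounded self-adjoint operator on a complex separable Hilbert space H and let T_1, …, T_N (N finite) be bounded positive operators on H with T_1 + ⋯ + T_N = I. Let ω_1, …, ω_N be independent real random variables, ω_n distributed with density ρ_n. Set A^ω = A + Σ_{n=1}^N ω_n T_n. Suppose f is a complex-valued function on the bounded operators on H such that (ω_1, …, ω_N, E) ↦ f(A^ω − E·I) is a bounded measurable function on ℝ^{N+1}. If for each n one has ρ_n ∈ C^m(ℝ) and ρ_n^{(k)} ∈ L¹(ℝ) for all 0 ≤ k ≤ m, then the function h(E) = E_ω[f(A^ω − E·I)] = ∫_{ℝ^N} f(A + Σ_{n=1}^N (ω_n − E) T_n) ∏_{n=1}^N ρ_n(ω_n) dω_n is of class C^m on ℝ. -/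
open MeasureTheory Complex ContinuousLinearMap

open Filter
open scoped ENNReal Topology

variable {N : ℕ}

lemma intg_smul {Φ : (Fin N → ℝ) → ℝ} (hΦ : Integrable Φ)
    {g : (Fin N → ℝ) → ℂ} (hg : AEStronglyMeasurable g volume) {M : ℝ}
    (hgb : ∀ ω, ‖g ω‖ ≤ M) :
    Integrable (fun ω => Φ ω • g ω) :=
  hΦ.smul_of_top_left (memLp_top_of_bound hg M (.of_forall hgb))

lemma cont_aux (Φ : (Fin N → ℝ) → ℝ) (hΦi : Integrable Φ)
    (g : (Fin N → ℝ) → ℂ) (hg : AEStronglyMeasurable g volume) (M : ℝ)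
    (hgb : ∀ ω, ‖g ω‖ ≤ M) :
    Continuous fun E : ℝ => ∫ ω, Φ (ω + fun _ => E) • g ω := by
  haveI : Fact ((1:ℝ≥0∞) ≤ 1) := ⟨le_refl _⟩
  let Φ₁ : Lp ℝ 1 (volume : Measure (Fin N → ℝ)) := hΦi.toL1 Φ
  have τcont : Continuous fun p : ℝ × (Fin N → ℝ) => p.2 + fun _ => p.1 := by fun_prop
  let τ : ℝ → C(Fin N → ℝ, Fin N → ℝ) := fun E => ⟨fun ω => ω + fun _ => E,
    τcont.comp (Continuous.prodMk_right E)⟩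
  have hτm : ∀ E, MeasurePreserving (τ E) volume volume := fun E =>
    measurePreserving_add_right volume _
  let u : ℝ → Lp ℝ 1 (volume : Measure (Fin N → ℝ)) :=
    fun E => Lp.compMeasurePreserving (τ E) (hτm E) Φ₁
  have hu : Continuous u := by
    rw [continuous_iff_continuousAt]
    intro E₀
    refine ContinuousAt.compMeasurePreservingLp continuousAt_const
      ((ContinuousMap.continuous_of_continuous_uncurry τ ?_).continuousAt) hτm
      ENNReal.one_ne_top
    exact τcont
  have hrep : ∀ E, (fun ω => Φ (ω + fun _ => E)) =ᵐ[(volume : Measure (Fin N → ℝ))]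
      (u E : (Fin N → ℝ) → ℝ) := by
    intro E
    have h1 : (u E : (Fin N → ℝ) → ℝ) =ᵐ[volume] ⇑Φ₁ ∘ (τ E) :=
      Lp.coeFn_compMeasurePreserving Φ₁ (hτm E)
    have h2 : ⇑Φ₁ ∘ (τ E) =ᵐ[volume] Φ ∘ (τ E) :=
      (hτm E).quasiMeasurePreserving.ae_eq_comp (hΦi.coeFn_toL1)
    exact ((h1.trans h2).symm : _)
  have key : ∀ E E', ‖(∫ ω, Φ (ω + fun _ => E) • g ω) -
      (∫ ω, Φ (ω + fun _ => E') • g ω)‖ ≤ (max M 0) * ‖u E - u E'‖ := by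
    intro E E'
    have hiE : Integrable (fun ω => Φ (ω + fun _ => E) • g ω) :=
      intg_smul (hΦi.comp_add_right _) hg hgb
    have hiE' : Integrable (fun ω => Φ (ω + fun _ => E') • g ω) :=
      intg_smul (hΦi.comp_add_right _) hg hgb
    rw [← integral_sub hiE hiE']
    have hsub : Integrable (fun ω => Φ (ω + fun _ => E) - Φ (ω + fun _ => E')) :=
      (hΦi.comp_add_right _).sub (hΦi.comp_add_right _)
    have hbd : ∀ ω, ‖Φ (ω + fun _ => E) • g ω - Φ (ω + fun _ => E') • g ω‖ ≤
        (max M 0) * ‖Φ (ω + fun _ => E) - Φ (ω + fun _ => E')‖ := by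
      intro ω
      rw [← sub_smul, norm_smul, mul_comm]
      exact mul_le_mul_of_nonneg_right ((hgb ω).trans (le_max_left _ _)) (norm_nonneg _)
    calc ‖∫ ω, (Φ (ω + fun _ => E) • g ω - Φ (ω + fun _ => E') • g ω)‖
        ≤ ∫ ω, (max M 0) * ‖Φ (ω + fun _ => E) - Φ (ω + fun _ => E')‖ := by
          refine (norm_integral_le_integral_norm _).trans ?_
          exact integral_mono_of_nonneg (.of_forall fun ω => norm_nonneg _)
            (hsub.norm.const_mul _) (.of_forall hbd)
      _ = (max M 0) * ∫ ω, ‖Φ (ω + fun _ => E) - Φ (ω + fun _ => E')‖ := by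
          rw [integral_const_mul]
      _ = (max M 0) * ‖u E - u E'‖ := by
          congr 1
          rw [L1.norm_eq_integral_norm]
          refine integral_congr_ae ?_
          filter_upwards [hrep E, hrep E', Lp.coeFn_sub (u E) (u E')] with ω h1 h2 h3
          rw [h3]
          simp [h1, h2]
  rw [continuous_iff_continuousAt]
  intro E₀
  rw [ContinuousAt, tendsto_iff_norm_sub_tendsto_zero]
  refine squeeze_zero (fun E => norm_nonneg _) (fun E => key E E₀) ?_
  have h0 : Tendsto (fun E => ‖u E - u E₀‖) (𝓝 E₀) (𝓝 0) :=
    tendsto_iff_norm_sub_tendsto_zero.mp (hu.tendsto E₀)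
  simpa using h0.const_mul (max M 0)

lemma key_lemma (g : (Fin N → ℝ) → ℂ) (hg : Measurable g) (M : ℝ)
    (hgb : ∀ ω, ‖g ω‖ ≤ M) :
    ∀ (m : ℕ) (φ : Fin N → ℝ → ℝ), (∀ n, ContDiff ℝ m (φ n)) →
      (∀ n, ∀ k ≤ m, Integrable (iteratedDeriv k (φ n))) →
      ContDiff ℝ m (fun E : ℝ => ∫ ω : Fin N → ℝ, (∏ n, φ n (ω n + E)) • g ω) := by
  intro m
  induction m with
  | zero =>
    intro φ hφ hint
    rw [show ((0:ℕ) : WithTop ℕ∞) = 0 from rfl, contDiff_zero]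
    have hΦi : Integrable (fun ω : Fin N → ℝ => ∏ n, φ n (ω n)) :=
      Integrable.fintype_prod (f := fun n => φ n)
        (fun n => by simpa using hint n 0 le_rfl)
    exact cont_aux _ hΦi g hg.aestronglyMeasurable M hgb
  | succ m ih =>
    intro φ hφ hint
    classical
    have hcast : ∀ n : Fin N, ContDiff ℝ ((m:ℕ)+1) (φ n) := by
      intro n
      have := hφ n
      rwa [show ((m+1 : ℕ) : WithTop ℕ∞) = (m : ℕ) + 1 by push_cast; rfl] at this
    have hφd : ∀ n, Differentiable ℝ (φ n) := fun n =>
      (hcast n).differentiable (by simp)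
    have hφc : ∀ n, Continuous (φ n) := fun n => (hφ n).continuous
    have hφdcd : ∀ n, ContDiff ℝ (m:ℕ) (deriv (φ n)) := fun n =>
      (contDiff_succ_iff_deriv.mp (hcast n)).2.2
    have hφdc : ∀ n, Continuous (deriv (φ n)) := fun n => (hφdcd n).continuous
    have hφi : ∀ n, Integrable (φ n) := fun n => by
      simpa using hint n 0 (Nat.zero_le _)
    set F : Fin N → Fin N → ℝ → ℝ := fun n => Function.update φ n (deriv (φ n)) with hF
    have hFeq : ∀ (n : Fin N) (v : Fin N → ℝ),
        (∏ j, F n j (v j)) = deriv (φ n) (v n) * ∏ j ∈ Finset.univ.erase n, φ j (v j) := by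
      intro n v
      rw [← Finset.mul_prod_erase Finset.univ (fun j => F n j (v j)) (Finset.mem_univ n)]
      congr 1
      · simp [hF]
      · exact Finset.prod_congr rfl fun j hj => by
          simp [hF, Function.update_of_ne (Finset.ne_of_mem_erase hj)]
    have hFc : ∀ n j, Continuous (F n j) := by
      intro n j
      rcases eq_or_ne j n with h | h
      · subst h; simp only [hF, Function.update_self]; exact hφdc j
      · simp only [hF, Function.update_of_ne h]; exact hφc j
    have hFcd : ∀ n j, ContDiff ℝ (m:ℕ) (F n j) := by
      intro n j
      rcases eq_or_ne j n with h | h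
      · subst h; simp only [hF, Function.update_self]; exact hφdcd j
      · simp only [hF, Function.update_of_ne h]; exact (hcast j).of_succ
    have hFint : ∀ n j, ∀ k ≤ m, Integrable (iteratedDeriv k (F n j)) := by
      intro n j k hk
      rcases eq_or_ne j n with h | h
      · subst h
        simp only [hF, Function.update_self]
        have := hint j (k+1) (Nat.succ_le_succ hk)
        rwa [iteratedDeriv_succ'] at this
      · simp only [hF, Function.update_of_ne h]
        exact hint j k (hk.trans (Nat.le_succ m))
    have hFi : ∀ n j, Integrable (F n j) := fun n j => by
      simpa using hFint n j 0 (Nat.zero_le _)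
    -- canonical integrability of translated products
    have hprod_int : ∀ (ψ : Fin N → ℝ → ℝ), (∀ j, Integrable (ψ j)) → ∀ t : ℝ,
        Integrable (fun ω : Fin N → ℝ => ∏ j, ψ j (ω j + t)) := by
      intro ψ hi t
      exact (Integrable.fintype_prod (f := fun j => ψ j) hi).comp_add_right (fun _ => t)
    have hQg_int : ∀ (n : Fin N) (t : ℝ),
        Integrable (fun ω : Fin N → ℝ => (∏ j, F n j (ω j + t)) • g ω) := fun n t =>
      intg_smul (hprod_int _ (hFi n) t) hg.aestronglyMeasurable hgb
    have hPg_int : ∀ t : ℝ,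
        Integrable (fun ω : Fin N → ℝ => (∏ n, φ n (ω n + t)) • g ω) := fun t =>
      intg_smul (hprod_int _ hφi t) hg.aestronglyMeasurable hgb
    set S : ℝ → ℂ := fun t => ∑ n, ∫ ω : Fin N → ℝ, (∏ j, F n j (ω j + t)) • g ω with hS
    have hih : ∀ n : Fin N, ContDiff ℝ (m:ℕ)
        (fun E : ℝ => ∫ ω : Fin N → ℝ, (∏ j, F n j (ω j + E)) • g ω) := fun n =>
      ih (F n) (hFcd n) (hFint n)
    have hScont : Continuous S := by
      apply continuous_finset_sum
      exact fun n _ => (hih n).continuous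
    -- continuity of the scalar integrand in (ω, t)
    have hscal : Continuous fun p : (Fin N → ℝ) × ℝ => (∑ n, ∏ j, F n j (p.1 j + p.2)) := by
      apply continuous_finset_sum
      intro n _
      apply continuous_finset_prod
      intro j _
      exact (hFc n j).comp (((continuous_apply j).comp continuous_fst).add continuous_snd)
    -- the FTC identity on an interval
    have main : ∀ a b : ℝ, a ≤ b →
        (∫ ω : Fin N → ℝ, (∏ n, φ n (ω n + b)) • g ω) -
          (∫ ω : Fin N → ℝ, (∏ n, φ n (ω n + a)) • g ω) = ∫ t in a..b, S t := by
      intro a b hab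
      have hderiv : ∀ (ω : Fin N → ℝ) (t : ℝ),
          HasDerivAt (fun s => ∏ n, φ n (ω n + s)) (∑ n, ∏ j, F n j (ω j + t)) t := by
        intro ω t
        have h1 : ∀ n : Fin N, n ∈ Finset.univ →
            HasDerivAt (fun s => φ n (ω n + s)) (deriv (φ n) (ω n + t)) t := by
          intro n _
          have h2 := ((hφd n (ω n + t)).hasDerivAt).comp t ((hasDerivAt_id t).const_add (ω n))
          simpa [Function.comp_def] using h2
        have h3 := HasDerivAt.fun_finsetProd h1
        refine h3.congr_deriv ?_
        symm
        refine Finset.sum_congr rfl fun n _ => ?_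
        rw [hFeq n (fun j => ω j + t)]
        simp [smul_eq_mul]
        ring
      have hptwise : ∀ ω : Fin N → ℝ,
          (∏ n, φ n (ω n + b)) - (∏ n, φ n (ω n + a)) =
            ∫ t in a..b, (∑ n, ∏ j, F n j (ω j + t)) := by
        intro ω
        rw [intervalIntegral.integral_eq_sub_of_hasDerivAt (fun t _ => hderiv ω t) ?_]
        exact (hscal.comp (Continuous.prodMk_right ω)).intervalIntegrable a b
      -- swap integrability
      have haesm : AEStronglyMeasurable
          (fun z : ℝ × (Fin N → ℝ) => (∑ n, ∏ j, F n j (z.2 j + z.1)) • g z.2)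
          ((volume.restrict (Set.Ioc a b)).prod volume) := by
        have : Measurable (fun z : ℝ × (Fin N → ℝ) => (∑ n, ∏ j, F n j (z.2 j + z.1)) • g z.2) := by
          have hc : Continuous fun z : ℝ × (Fin N → ℝ) => (∑ n, ∏ j, F n j (z.2 j + z.1)) :=
            hscal.comp continuous_swap
          exact hc.measurable.smul (hg.comp measurable_snd)
        exact this.aestronglyMeasurable
      have hconst_bd : ∀ t : ℝ,
          (∫ ω : Fin N → ℝ, ‖(∑ n, ∏ j, F n j (ω j + t)) • g ω‖) ≤
            (max M 0) * ∑ n, ∫ ω : Fin N → ℝ, ‖∏ j, F n j (ω j)‖ := by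
        intro t
        have hsum_int : Integrable (fun ω : Fin N → ℝ => ∑ n, ∏ j, F n j (ω j + t)) :=
          integrable_finset_sum _ fun n _ => hprod_int _ (hFi n) t
        calc (∫ ω : Fin N → ℝ, ‖(∑ n, ∏ j, F n j (ω j + t)) • g ω‖)
            ≤ ∫ ω : Fin N → ℝ, (max M 0) * ∑ n, ‖∏ j, F n j (ω j + t)‖ := by
              refine integral_mono_of_nonneg (.of_forall fun ω => norm_nonneg _)
                (((integrable_finset_sum _ fun n _ => (hprod_int _ (hFi n) t).norm).const_mul _))
                (.of_forall fun ω => ?_)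
              dsimp only
              rw [norm_smul, mul_comm]
              exact mul_le_mul ((hgb ω).trans (le_max_left _ _)) (norm_sum_le _ _)
                (norm_nonneg _) (le_max_right M 0)
          _ = (max M 0) * ∑ n, ∫ ω : Fin N → ℝ, ‖∏ j, F n j (ω j + t)‖ := by
              rw [integral_const_mul, integral_finset_sum _
                (fun n _ => (hprod_int _ (hFi n) t).norm)]
          _ = (max M 0) * ∑ n, ∫ ω : Fin N → ℝ, ‖∏ j, F n j (ω j)‖ := by
              congr 1
              refine Finset.sum_congr rfl fun n _ => ?_
              exact integral_add_right_eq_self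
                (fun ω : Fin N → ℝ => ‖∏ j, F n j (ω j)‖) (fun _ => t)
      have hswap : Integrable
          (fun z : ℝ × (Fin N → ℝ) => (∑ n, ∏ j, F n j (z.2 j + z.1)) • g z.2)
          ((volume.restrict (Set.Ioc a b)).prod volume) := by
        refine (integrable_prod_iff haesm).mpr ⟨?_, ?_⟩
        · refine Eventually.of_forall fun t => ?_
          exact intg_smul (integrable_finset_sum _ fun n _ => hprod_int _ (hFi n) t)
            hg.aestronglyMeasurable hgb
        · refine Integrable.mono' (integrable_const
            ((max M 0) * ∑ n, ∫ ω : Fin N → ℝ, ‖∏ j, F n j (ω j)‖))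
            haesm.norm.integral_prod_right' (Eventually.of_forall fun t => ?_)
          rw [Real.norm_of_nonneg (integral_nonneg fun ω => norm_nonneg _)]
          exact hconst_bd t
      calc (∫ ω : Fin N → ℝ, (∏ n, φ n (ω n + b)) • g ω) -
            (∫ ω : Fin N → ℝ, (∏ n, φ n (ω n + a)) • g ω)
          = ∫ ω : Fin N → ℝ, ((∏ n, φ n (ω n + b)) - (∏ n, φ n (ω n + a))) • g ω := by
            rw [← integral_sub (hPg_int b) (hPg_int a)]
            congr 1; funext ω; rw [sub_smul]
        _ = ∫ ω : Fin N → ℝ, (∫ t in a..b, (∑ n, ∏ j, F n j (ω j + t))) • g ω := by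
            congr 1; funext ω; rw [hptwise ω]
        _ = ∫ ω : Fin N → ℝ, ∫ t in a..b, (∑ n, ∏ j, F n j (ω j + t)) • g ω := by
            congr 1; funext ω; rw [intervalIntegral.integral_smul_const]
        _ = ∫ ω : Fin N → ℝ, ∫ t in Set.Ioc a b, (∑ n, ∏ j, F n j (ω j + t)) • g ω := by
            congr 1; funext ω; rw [intervalIntegral.integral_of_le hab]
        _ = ∫ t in Set.Ioc a b, ∫ ω : Fin N → ℝ, (∑ n, ∏ j, F n j (ω j + t)) • g ω := by
            exact (integral_integral_swap hswap).symm
        _ = ∫ t in Set.Ioc a b, S t := by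
            refine setIntegral_congr_fun measurableSet_Ioc fun t _ => ?_
            have hrw : (fun ω : Fin N → ℝ => (∑ n, ∏ j, F n j (ω j + t)) • g ω) =
                fun ω : Fin N → ℝ => ∑ n, (∏ j, F n j (ω j + t)) • g ω := by
              funext ω; rw [Finset.sum_smul]
            rw [hrw, integral_finset_sum _ (fun n _ => hQg_int n t)]
        _ = ∫ t in a..b, S t := (intervalIntegral.integral_of_le hab).symm
    -- the FTC identity for arbitrary E
    have hFTC : ∀ E : ℝ, (∫ ω : Fin N → ℝ, (∏ n, φ n (ω n + E)) • g ω) =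
        (∫ ω : Fin N → ℝ, (∏ n, φ n (ω n + 0)) • g ω) + ∫ t in (0:ℝ)..E, S t := by
      intro E
      rcases le_total 0 E with h | h
      · have := main 0 E h
        linear_combination this
      · have := main E 0 h
        rw [intervalIntegral.integral_symm] at this
        linear_combination -this
    have hHasD : ∀ E : ℝ, HasDerivAt
        (fun E : ℝ => ∫ ω : Fin N → ℝ, (∏ n, φ n (ω n + E)) • g ω) (S E) E := by
      intro E₀
      have h1 : HasDerivAt (fun E : ℝ =>
          (∫ ω : Fin N → ℝ, (∏ n, φ n (ω n + 0)) • g ω) + ∫ t in (0:ℝ)..E, S t) (S E₀) E₀ := by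
        have h2 := intervalIntegral.integral_hasDerivAt_right
          (hScont.intervalIntegrable 0 E₀) (hScont.stronglyMeasurableAtFilter _ _)
          hScont.continuousAt
        exact h2.const_add _
      have heq : (fun E : ℝ => ∫ ω : Fin N → ℝ, (∏ n, φ n (ω n + E)) • g ω) =
          fun E : ℝ => (∫ ω : Fin N → ℝ, (∏ n, φ n (ω n + 0)) • g ω) +
            ∫ t in (0:ℝ)..E, S t := funext fun E => hFTC E
      rw [heq]
      exact h1
    rw [show ((m+1 : ℕ) : WithTop ℕ∞) = (m : ℕ) + 1 by push_cast; rfl]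
    rw [contDiff_succ_iff_deriv]
    refine ⟨fun x => (hHasD x).differentiableAt, ?_, ?_⟩
    · intro hω; exact absurd hω (by simp)
    · have hdeq : deriv (fun E : ℝ => ∫ ω : Fin N → ℝ, (∏ n, φ n (ω n + E)) • g ω) = S :=
        funext fun E => (hHasD E).deriv
      rw [hdeq, hS]
      exact ContDiff.sum fun n _ => hih n

lemma meas_comp0 {α : Type*} [MeasurableSpace α] {G : α × ℝ → ℂ} (h : Measurable G) :
    Measurable fun ω : α => G (ω, 0) :=
  h.comp (measurable_id.prodMk measurable_const)

/-- Smoothing by averaging over finitely many random couplings: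
if `A` is a bounded self-adjoint operator, `T 1, …, T N` are bounded positive operators
summing to the identity, `f` is a complex valued function on bounded operators such that
`(ω, E) ↦ f (A + ∑ (ω n - E) • T n)` is bounded and measurable, and each density `ρ n`
is `C^m` with all derivatives up to order `m` integrable, then
`h E = ∫ f (A + ∑ (ω n - E) • T n) ∏ ρ n (ω n) dω` is of class `C^m` on `ℝ`. -/
theorem statement0
    (H : Type*) [NormedAddCommGroup H] [InnerProductSpace ℂ H] [CompleteSpace H]
    [TopologicalSpace.SeparableSpace H]
    (N : ℕ) (m : ℕ)
    (A : H →L[ℂ] H) (hA : IsSelfAdjoint A)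
    (T : Fin N → (H →L[ℂ] H))
    (hTpos : ∀ n, (T n).IsPositive)
    (hTsum : ∑ n, T n = 1)
    (ρ : Fin N → ℝ → ℝ)
    (hρpos : ∀ n x, 0 ≤ ρ n x)
    (hρprob : ∀ n, ∫ x, ρ n x = 1)
    (hρsmooth : ∀ n, ContDiff ℝ m (ρ n))
    (hρL1 : ∀ n, ∀ k ≤ m, Integrable (iteratedDeriv k (ρ n)))
    (f : (H →L[ℂ] H) → ℂ)
    (hfmeas : Measurable (fun p : (Fin N → ℝ) × ℝ =>
      f (A + ∑ n, (p.1 n - p.2) • T n)))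
    (hfbdd : ∃ M : ℝ, ∀ p : (Fin N → ℝ) × ℝ,
      ‖f (A + ∑ n, (p.1 n - p.2) • T n)‖ ≤ M) :
    ContDiff ℝ m (fun E : ℝ =>
      ∫ ω : Fin N → ℝ, (∏ n, ρ n (ω n)) • f (A + ∑ n, (ω n - E) • T n)) := by
  obtain ⟨M, hM⟩ := hfbdd
  set g : (Fin N → ℝ) → ℂ := fun ω => f (A + ∑ n, (ω n) • T n) with hgdef
  have hgmeas : Measurable g := by
    have h0 := meas_comp0 hfmeas
    simpa [hgdef, sub_zero] using h0
  have hgbdd : ∀ ω, ‖g ω‖ ≤ M := by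
    intro ω
    have := hM (ω, 0)
    simpa [hgdef] using this
  have key := key_lemma g hgmeas M hgbdd m ρ hρsmooth hρL1
  have heq : (fun E : ℝ =>
      ∫ ω : Fin N → ℝ, (∏ n, ρ n (ω n)) • f (A + ∑ n, (ω n - E) • T n)) =
      fun E : ℝ => ∫ ω : Fin N → ℝ, (∏ n, ρ n (ω n + E)) • g ω := by
    funext E
    have h1 := (integral_add_right_eq_self (μ := (volume : Measure (Fin N → ℝ)))
      (fun ω : Fin N → ℝ => (∏ n, ρ n (ω n)) • f (A + ∑ n, (ω n - E) • T n))
      (fun _ => E)).symm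
    rw [h1]
    congr 1
    funext ω
    simp only [Pi.add_apply, add_sub_cancel_right, hgdef]
  rw [heq]
  exact key
end

section
/- Let A and B be bounded operators on a complex separable Hilbert space H which generate contraction semigroups, i.e. ‖e^{tA}‖ ≤ 1 and ‖e^{tB}‖ ≤ 1 for all t ≥ 0. Then for every 0 < s < 1 and every t ≥ 0, ‖e^{tA} − e^{tB}‖ ≤ 2^{1−s} t^s ‖A − B‖^s. -/
open MeasureTheory Complex ContinuousLinearMap
open scoped Nat

section Aux

variable {R : Type*} [NormedRing R]

/-- Telescoping bound for powers. -/
lemma my_pow_sub_pow_le (X Y : R) (n : ℕ) :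
    ‖X ^ (n + 1) - Y ^ (n + 1)‖ ≤ (n + 1) * (max ‖X‖ ‖Y‖) ^ n * ‖X - Y‖ := by
  set M := max ‖X‖ ‖Y‖ with hM
  have hM0 : 0 ≤ M := le_trans (norm_nonneg X) (le_max_left _ _)
  have hXM : ‖X‖ ≤ M := le_max_left _ _
  have hYM : ‖Y‖ ≤ M := le_max_right _ _
  induction n with
  | zero => simp
  | succ n ih =>
    push_cast
    have key : X ^ (n + 2) - Y ^ (n + 2)
        = X * (X ^ (n + 1) - Y ^ (n + 1)) + (X - Y) * Y ^ (n + 1) := by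
      rw [pow_succ' X (n+1), pow_succ' Y (n+1), mul_sub, sub_mul]; abel
    calc ‖X ^ (n + 2) - Y ^ (n + 2)‖
        ≤ ‖X * (X ^ (n + 1) - Y ^ (n + 1))‖ + ‖(X - Y) * Y ^ (n + 1)‖ := by
          rw [key]; exact norm_add_le _ _
      _ ≤ ‖X‖ * ‖X ^ (n + 1) - Y ^ (n + 1)‖ + ‖X - Y‖ * ‖Y ^ (n + 1)‖ := by
          gcongr <;> exact norm_mul_le _ _
      _ ≤ M * ((n + 1) * M ^ n * ‖X - Y‖) + ‖X - Y‖ * M ^ (n + 1) := by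
          gcongr
          · exact (norm_pow_le' _ (Nat.succ_pos n)).trans (by gcongr)
      _ ≤ (n + 1 + 1) * M ^ (n + 1) * ‖X - Y‖ := by
          have : M * ((n + 1) * M ^ n * ‖X - Y‖) = (n+1) * M ^ (n+1) * ‖X - Y‖ := by
            ring
          rw [this]; nlinarith [norm_nonneg (X - Y), pow_nonneg hM0 (n+1)]


/-- Lipschitz-type bound for the exponential. -/
lemma my_exp_sub_exp_le {R : Type*} [NormedRing R] [NormedAlgebra ℂ R] [CompleteSpace R]
    (X Y : R) :
    ‖NormedSpace.exp X - NormedSpace.exp Y‖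
      ≤ ‖X - Y‖ * Real.exp (max ‖X‖ ‖Y‖) := by
  set M := max ‖X‖ ‖Y‖ with hM
  have hM0 : 0 ≤ M := le_trans (norm_nonneg X) (le_max_left _ _)
  set D := ‖X - Y‖ with hD
  set f : ℕ → R := fun n => (n !⁻¹ : ℂ) • (X ^ n - Y ^ n) with hf
  set g : ℕ → ℝ := fun n => Nat.rec 0 (fun k _ => D * (M ^ k / k !)) n with hg
  have hfs : Summable f := by
    have := (NormedSpace.expSeries_summable' (𝕂 := ℂ) X).sub
      (NormedSpace.expSeries_summable' (𝕂 := ℂ) Y)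
    simpa [hf, smul_sub] using this
  have hX := NormedSpace.expSeries_summable' (𝕂 := ℂ) X
  have hY := NormedSpace.expSeries_summable' (𝕂 := ℂ) Y
  have hdiff : NormedSpace.exp X - NormedSpace.exp Y = ∑' n, f n := by
    rw [NormedSpace.exp_eq_tsum (𝕂 := ℂ)]
    beta_reduce
    rw [← Summable.tsum_sub hX hY]
    simp [hf, smul_sub]
  have hbound : ∀ n, ‖f n‖ ≤ g n := by
    intro n
    cases n with
    | zero => simp [hf, hg]
    | succ n =>
      have h1 : ‖f (n + 1)‖ = ((n + 1)! : ℝ)⁻¹ * ‖X ^ (n+1) - Y ^ (n+1)‖ := by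
        simp [hf, norm_smul]
      rw [h1]
      have h2 := my_pow_sub_pow_le X Y n
      have h3 : ((n + 1)! : ℝ) = ((n:ℝ) + 1) * n ! := by
        rw [Nat.factorial_succ]; push_cast; ring
      have hfac : (0:ℝ) < n ! := by positivity
      have heq : ((n + 1)! : ℝ)⁻¹ * (((n:ℝ) + 1) * M ^ n * D) = D * (M ^ n / n !) := by
        rw [h3]; field_simp
      calc ((n + 1)! : ℝ)⁻¹ * ‖X ^ (n+1) - Y ^ (n+1)‖
          ≤ ((n + 1)! : ℝ)⁻¹ * (((n:ℝ) + 1) * M ^ n * D) := by gcongr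
        _ = D * (M ^ n / n !) := heq
        _ = g (n + 1) := rfl
  rw [hdiff]
  have hgs : Summable g := by
    have h1 : Summable (fun n => g (n+1)) := by
      simpa [hg] using (Real.summable_pow_div_factorial M).mul_left D
    exact (summable_nat_add_iff 1).mp h1
  have hnorm : Summable (fun n => ‖f n‖) :=
    Summable.of_nonneg_of_le (fun n => norm_nonneg _) hbound hgs
  calc ‖∑' n, f n‖ ≤ ∑' n, ‖f n‖ := norm_tsum_le_tsum_norm hnorm
    _ ≤ ∑' n, g n := Summable.tsum_le_tsum hbound hnorm hgs
    _ = D * Real.exp M := by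
        rw [Summable.tsum_eq_zero_add hgs]
        show (0:ℝ) + ∑' n, D * (M ^ n / n !) = D * Real.exp M
        rw [zero_add, tsum_mul_left, Real.exp_eq_exp_ℝ, NormedSpace.exp_eq_tsum_div]


lemma my_interp (x c s : ℝ) (hx : 0 ≤ x) (hs0 : 0 < s) (hs1 : s < 1)
    (h1 : c ≤ x) (h2 : c ≤ 2) : c ≤ 2 ^ (1 - s) * x ^ s := by
  rcases le_or_gt x 2 with hx2 | hx2
  · rcases eq_or_lt_of_le hx with h0 | h0
    · have : x ^ s = 0 := by rw [← h0, Real.zero_rpow (ne_of_gt hs0)]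
      rw [this, mul_zero]
      linarith [h1, h0]
    · calc c ≤ x := h1
        _ = x ^ (1 - s) * x ^ s := by
            have hss : (1 - s) + s = 1 := by ring
            rw [← Real.rpow_add h0, hss, Real.rpow_one]
        _ ≤ 2 ^ (1 - s) * x ^ s := by
            have h4 : x ^ (1 - s) ≤ 2 ^ (1 - s) := Real.rpow_le_rpow hx hx2 (by linarith)
            exact mul_le_mul_of_nonneg_right h4 (Real.rpow_nonneg hx s)
  · calc c ≤ 2 := h2
      _ = 2 ^ (1 - s) * 2 ^ s := by
          have hss : (1 - s) + s = 1 := by ring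
          rw [← Real.rpow_add (by norm_num : (0:ℝ) < 2), hss, Real.rpow_one]
      _ ≤ 2 ^ (1 - s) * x ^ s := by
          have h4 : (2:ℝ) ^ s ≤ x ^ s := Real.rpow_le_rpow (by norm_num) hx2.le hs0.le
          exact mul_le_mul_of_nonneg_left h4 (Real.rpow_nonneg (by norm_num) _)

end Aux

/-- If the bounded operators `A, B` generate contraction semigroups
(`‖e^{tA}‖ ≤ 1` and `‖e^{tB}‖ ≤ 1` for `t ≥ 0`), then for every `0 < s < 1` and `t ≥ 0`,
`‖e^{tA} − e^{tB}‖ ≤ 2^{1−s} t^s ‖A − B‖^s`. -/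
theorem statement5
    (H : Type*) [NormedAddCommGroup H] [InnerProductSpace ℂ H] [CompleteSpace H]
    [TopologicalSpace.SeparableSpace H]
    (A B : H →L[ℂ] H)
    (hA : ∀ t : ℝ, 0 ≤ t → ‖NormedSpace.exp ((t : ℂ) • A)‖ ≤ 1)
    (hB : ∀ t : ℝ, 0 ≤ t → ‖NormedSpace.exp ((t : ℂ) • B)‖ ≤ 1) :
    ∀ s : ℝ, 0 < s → s < 1 → ∀ t : ℝ, 0 ≤ t →
      ‖NormedSpace.exp ((t : ℂ) • A) - NormedSpace.exp ((t : ℂ) • B)‖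
        ≤ 2 ^ (1 - s) * t ^ s * ‖A - B‖ ^ s := by
  intro s hs0 hs1 t ht
  set M0 := max ‖A‖ ‖B‖ with hM0
  have hM0nn : 0 ≤ M0 := le_trans (norm_nonneg A) (le_max_left _ _)
  have key : ‖NormedSpace.exp ((t:ℂ) • A) - NormedSpace.exp ((t:ℂ) • B)‖
      ≤ t * ‖A - B‖ := by
    have hseq : ∀ n : ℕ,
        ‖NormedSpace.exp ((t:ℂ) • A) - NormedSpace.exp ((t:ℂ) • B)‖
          ≤ t * ‖A - B‖ * Real.exp (t * M0 / (n+1)) := by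
      intro n
      set h : ℝ := t / (n+1) with hh
      have hn1 : (0:ℝ) < (n:ℝ) + 1 := by positivity
      have hhnn : 0 ≤ h := div_nonneg ht hn1.le
      set a := NormedSpace.exp ((h:ℂ) • A) with ha
      set b := NormedSpace.exp ((h:ℂ) • B) with hb
      have hnh : ((n:ℝ) + 1) * h = t := by
        rw [hh]; field_simp
      have hcast : ∀ C : H →L[ℂ] H, (t:ℂ) • C = (n+1) • ((h:ℂ) • C) := by
        intro C
        rw [← Nat.cast_smul_eq_nsmul ℂ, smul_smul]
        congr 1
        have : ((n+1 : ℕ) : ℂ) * (h:ℂ) = (((n:ℝ)+1) * h : ℝ) := by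
          push_cast; ring
        rw [this, hnh]
      have hexpA : NormedSpace.exp ((t:ℂ) • A) = a ^ (n+1) := by
        letI : NormedAlgebra ℚ (H →L[ℂ] H) := NormedAlgebra.restrictScalars ℚ ℂ (H →L[ℂ] H)
        rw [hcast A, NormedSpace.exp_nsmul]
      have hexpB : NormedSpace.exp ((t:ℂ) • B) = b ^ (n+1) := by
        letI : NormedAlgebra ℚ (H →L[ℂ] H) := NormedAlgebra.restrictScalars ℚ ℂ (H →L[ℂ] H)
        rw [hcast B, NormedSpace.exp_nsmul]
      have ha1 : ‖a‖ ≤ 1 := hA h hhnn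
      have hb1 : ‖b‖ ≤ 1 := hB h hhnn
      have hpow : ‖a ^ (n+1) - b ^ (n+1)‖ ≤ ((n:ℝ)+1) * ‖a - b‖ := by
        have h2 := my_pow_sub_pow_le a b n
        have hmnn : 0 ≤ max ‖a‖ ‖b‖ := le_trans (norm_nonneg a) (le_max_left _ _)
        have hm1 : (max ‖a‖ ‖b‖) ^ n ≤ 1 := pow_le_one₀ hmnn (max_le ha1 hb1)
        calc ‖a ^ (n+1) - b ^ (n+1)‖
            ≤ ((n:ℝ)+1) * (max ‖a‖ ‖b‖) ^ n * ‖a - b‖ := h2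
          _ ≤ ((n:ℝ)+1) * 1 * ‖a - b‖ := by
              gcongr
          _ = ((n:ℝ)+1) * ‖a - b‖ := by ring
      have hab : ‖a - b‖ ≤ h * ‖A - B‖ * Real.exp (h * M0) := by
        have h3 := my_exp_sub_exp_le ((h:ℂ) • A) ((h:ℂ) • B)
        have hnorm : ∀ C : H →L[ℂ] H, ‖(h:ℂ) • C‖ = h * ‖C‖ := by
          intro C
          rw [norm_smul, Complex.norm_real, Real.norm_of_nonneg hhnn]
        have hsub : (h:ℂ) • A - (h:ℂ) • B = (h:ℂ) • (A - B) := (smul_sub _ _ _).symm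
        have hmax : max ‖(h:ℂ) • A‖ ‖(h:ℂ) • B‖ ≤ h * M0 := by
          rw [hnorm A, hnorm B]
          exact max_le (by gcongr; exact le_max_left _ _) (by gcongr; exact le_max_right _ _)
        calc ‖a - b‖ ≤ ‖(h:ℂ) • A - (h:ℂ) • B‖ * Real.exp (max ‖(h:ℂ) • A‖ ‖(h:ℂ) • B‖) := h3
          _ ≤ (h * ‖A - B‖) * Real.exp (h * M0) := by
              have e1 : ‖(h:ℂ) • A - (h:ℂ) • B‖ = h * ‖A - B‖ := by rw [hsub, hnorm]
              rw [e1]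
              exact mul_le_mul_of_nonneg_left (Real.exp_le_exp.mpr hmax)
                (mul_nonneg hhnn (norm_nonneg _))
      calc ‖NormedSpace.exp ((t:ℂ) • A) - NormedSpace.exp ((t:ℂ) • B)‖
          = ‖a ^ (n+1) - b ^ (n+1)‖ := by rw [hexpA, hexpB]
        _ ≤ ((n:ℝ)+1) * ‖a - b‖ := hpow
        _ ≤ ((n:ℝ)+1) * (h * ‖A - B‖ * Real.exp (h * M0)) := by gcongr
        _ = t * ‖A - B‖ * Real.exp (t * M0 / (n+1)) := by
            have hexpeq : Real.exp (h * M0) = Real.exp (t * M0 / ((n:ℝ)+1)) := by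
              rw [hh]; ring_nf
            rw [hexpeq, ← hnh]; ring
    have hlim : Filter.Tendsto
        (fun n : ℕ => t * ‖A - B‖ * Real.exp (t * M0 / (n+1)))
        Filter.atTop (nhds (t * ‖A - B‖)) := by
      have h1 : Filter.Tendsto (fun n : ℕ => t * M0 / ((n:ℝ)+1)) Filter.atTop (nhds 0) := by
        have h2 := (tendsto_const_div_atTop_nhds_zero_nat (t * M0)).comp
          (Filter.tendsto_add_atTop_nat 1)
        refine h2.congr fun x => ?_
        simp only [Function.comp_apply]
        push_cast
        ring
      have h3 := (Real.continuous_exp.tendsto 0).comp h1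
      have h4 := h3.const_mul (t * ‖A - B‖)
      simpa [Function.comp] using h4
    exact ge_of_tendsto hlim (Filter.Eventually.of_forall hseq)
  have key2 : ‖NormedSpace.exp ((t:ℂ) • A) - NormedSpace.exp ((t:ℂ) • B)‖ ≤ 2 := by
    calc ‖NormedSpace.exp ((t:ℂ) • A) - NormedSpace.exp ((t:ℂ) • B)‖
        ≤ ‖NormedSpace.exp ((t:ℂ) • A)‖ + ‖NormedSpace.exp ((t:ℂ) • B)‖ := norm_sub_le _ _
      _ ≤ 2 := by linarith [hA t ht, hB t ht]
  have hfin := my_interp (t * ‖A - B‖) _ s (mul_nonneg ht (norm_nonneg _)) hs0 hs1 key key2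
  calc ‖NormedSpace.exp ((t:ℂ) • A) - NormedSpace.exp ((t:ℂ) • B)‖
      ≤ 2 ^ (1 - s) * (t * ‖A - B‖) ^ s := hfin
    _ = 2 ^ (1 - s) * t ^ s * ‖A - B‖ ^ s := by
        rw [Real.mul_rpow ht (norm_nonneg _), mul_assoc]
end

section
/- Let 0 < τ < 1 and let ψ : ℝ → ℂ be a compactly supported differentiable function whose derivative ψ' is τ-Hölder continuous. Then there is a constant C (depending on ψ and τ) such that for all w ∈ ℝ with |w| ≥ 1, |∫_ℝ e^{iwx} ψ(x) dx| ≤ C / |w|^{1+τ}. -/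
open MeasureTheory Complex

-- continuity of a Hölder function
lemma holder_cont {f : ℝ → ℂ} {C τ : ℝ} (hτ : 0 < τ)
    (h : ∀ x y : ℝ, ‖f x - f y‖ ≤ C * |x - y| ^ τ) : Continuous f := by
  rw [continuous_iff_continuousAt]
  intro x
  rw [ContinuousAt, tendsto_iff_norm_sub_tendsto_zero]
  have hg : Filter.Tendsto (fun y : ℝ => C * |y - x| ^ τ) (nhds x) (nhds 0) := by
    have h1 : Filter.Tendsto (fun y : ℝ => |y - x|) (nhds x) (nhds 0) := by
      have hcc : Continuous (fun y : ℝ => |y - x|) :=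
        (continuous_id.sub continuous_const).abs
      simpa using hcc.tendsto x
    have h2 : Filter.Tendsto (fun t : ℝ => C * t ^ τ) (nhds 0) (nhds 0) := by
      have h3 : ContinuousAt (fun t : ℝ => t ^ τ) 0 :=
        Real.continuousAt_rpow_const 0 τ (Or.inr hτ.le)
      have := (h3.const_smul C).tendsto
      simpa [Real.zero_rpow hτ.ne', Pi.smul_def, smul_eq_mul] using this
    exact h2.comp h1
  exact squeeze_zero (fun y => norm_nonneg _) (fun y => h y x) hg

/-- Fourier decay: if `ψ : ℝ → ℂ` is compactly supported and
differentiable with `τ`-Hölder continuous derivative (`0 < τ < 1`), then there is a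
constant `C` such that `|∫ e^{iwx} ψ(x) dx| ≤ C / |w|^{1+τ}` for all `|w| ≥ 1`. -/
theorem statement7
    (τ : ℝ) (hτ : 0 < τ) (hτ1 : τ < 1)
    (ψ : ℝ → ℂ)
    (hψsupp : HasCompactSupport ψ)
    (hψdiff : Differentiable ℝ ψ)
    (hψhold : ∃ C : ℝ, ∀ x y : ℝ, ‖deriv ψ x - deriv ψ y‖ ≤ C * |x - y| ^ τ) :
    ∃ C : ℝ, ∀ w : ℝ, 1 ≤ |w| →
      ‖∫ x : ℝ, Complex.exp (I * w * x) * ψ x‖ ≤ C / |w| ^ (1 + τ) := by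
  obtain ⟨C, hC⟩ := hψhold
  have hC0 : 0 ≤ C := by
    have := hC 0 1
    have h1 : |(0:ℝ) - 1| ^ τ = 1 := by
      norm_num
    calc (0:ℝ) ≤ ‖deriv ψ 0 - deriv ψ 1‖ := norm_nonneg _
      _ ≤ C * |(0:ℝ) - 1| ^ τ := hC 0 1
      _ = C := by rw [h1, mul_one]
  set ψ' := deriv ψ with hψ'
  have hcont' : Continuous ψ' := holder_cont hτ hC
  have hψcont : Continuous ψ := hψdiff.continuous
  have hψC1 : ContDiff ℝ 1 ψ := contDiff_one_iff_deriv.mpr ⟨hψdiff, hcont'⟩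
  have hsupp' : HasCompactSupport ψ' := hψsupp.deriv
  obtain ⟨R, hR⟩ : ∃ R : ℝ, tsupport ψ' ⊆ Metric.closedBall 0 R :=
    hsupp'.isBounded.subset_closedBall 0
  set R' := max R 0 with hR'def
  have hR'0 : 0 ≤ R' := le_max_right _ _
  have hR' : tsupport ψ' ⊆ Metric.closedBall 0 R' :=
    hR.trans (Metric.closedBall_subset_closedBall (le_max_left _ _))
  refine ⟨C * (R' + Real.pi) * Real.pi ^ τ, fun w hw => ?_⟩
  have hw1 : (0:ℝ) < |w| := lt_of_lt_of_le one_pos hw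
  have hw0 : w ≠ 0 := by simpa using hw1.ne'
  set h : ℝ := Real.pi / w with hhdef
  have hwh : w * h = Real.pi := mul_div_cancel₀ _ hw0
  have hhabs : |h| = Real.pi / |w| := by
    rw [hhdef, abs_div, abs_of_pos Real.pi_pos]
  have hhle : |h| ≤ Real.pi := by
    rw [hhabs]; exact div_le_self Real.pi_pos.le hw
  -- the exponential and its properties
  have hec : Continuous fun x : ℝ => Complex.exp (I * w * x) :=
    Complex.continuous_exp.comp (continuous_const.mul Complex.continuous_ofReal)
  have hne : ∀ x : ℝ, ‖Complex.exp (I * w * x)‖ = 1 := by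
    intro x
    rw [show I * (w:ℂ) * (x:ℂ) = ((w * x : ℝ) : ℂ) * I by push_cast; ring]
    simpa using Complex.norm_exp_ofReal_mul_I (w * x)
  have hexp : ∀ x : ℝ, HasDerivAt (fun x : ℝ => Complex.exp (I * w * x))
      (I * w * Complex.exp (I * w * x)) x := by
    intro x
    have h1 : HasDerivAt (fun x : ℝ => (x : ℂ)) 1 x := by
      simpa using (hasDerivAt_id x).ofReal_comp
    have h2 : HasDerivAt (fun x : ℝ => I * (w:ℂ) * (x:ℂ)) (I * w) x := by
      simpa using h1.const_mul (I * (w:ℂ))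
    have h3 := h2.cexp
    simpa [mul_comm] using h3
  -- integrability of the pieces
  have hint1 : Integrable fun x : ℝ => Complex.exp (I * w * x) * ψ x :=
    (hec.mul hψcont).integrable_of_hasCompactSupport hψsupp.mul_left
  have hint2 : Integrable fun x : ℝ => Complex.exp (I * w * x) * ψ' x :=
    (hec.mul hcont').integrable_of_hasCompactSupport hsupp'.mul_left
  have hsupph : HasCompactSupport fun x : ℝ => ψ' (x + h) := by
    have := hsupp'.comp_homeomorph (Homeomorph.addRight h)
    simpa [Function.comp_def] using this
  have hconth : Continuous fun x : ℝ => ψ' (x + h) :=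
    hcont'.comp (continuous_id.add continuous_const)
  have hint3 : Integrable fun x : ℝ => Complex.exp (I * w * x) * ψ' (x + h) :=
    (hec.mul hconth).integrable_of_hasCompactSupport hsupph.mul_left
  -- Step A : integration by parts
  set u : ℝ → ℂ := fun x => Complex.exp (I * w * x) * ψ x with hudef
  have huC1 : ContDiff ℝ 1 u := by
    have he1 : ContDiff ℝ 1 fun x : ℝ => Complex.exp (I * w * x) := by
      have hl : ContDiff ℝ 1 fun x : ℝ => I * (w:ℂ) * (x:ℂ) :=
        contDiff_const.mul Complex.ofRealCLM.contDiff
      exact Complex.contDiff_exp.comp hl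
    exact he1.mul hψC1
  have hKu : HasCompactSupport u := hψsupp.mul_left
  have hu : ∀ x : ℝ, HasDerivAt u
      (I * w * Complex.exp (I * w * x) * ψ x + Complex.exp (I * w * x) * ψ' x) x := by
    intro x
    exact (hexp x).mul (hψdiff x).hasDerivAt
  have hderivu : ∀ x : ℝ, deriv u x
      = I * w * Complex.exp (I * w * x) * ψ x + Complex.exp (I * w * x) * ψ' x :=
    fun x => (hu x).deriv
  have hdu_cont : Continuous (deriv u) := huC1.continuous_deriv le_rfl
  have hdu_int : Integrable (deriv u) :=
    hdu_cont.integrable_of_hasCompactSupport hKu.deriv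
  have hzero : ∫ x : ℝ, deriv u x = 0 := by
    have h1 := hKu.integral_Iic_deriv_eq huC1 0
    have h2 := hKu.integral_Ioi_deriv_eq huC1 0
    have h3 := intervalIntegral.integral_Iic_add_Ioi (b := (0:ℝ)) (μ := volume)
      hdu_int.integrableOn hdu_int.integrableOn
    rw [h1, h2] at h3
    simpa using h3.symm
  have keyA : (I * (w:ℂ)) * ∫ x : ℝ, Complex.exp (I * w * x) * ψ x
      = - ∫ x : ℝ, Complex.exp (I * w * x) * ψ' x := by
    have hsplit : ∫ x : ℝ, deriv u x
        = (I * (w:ℂ)) * (∫ x : ℝ, Complex.exp (I * w * x) * ψ x)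
          + ∫ x : ℝ, Complex.exp (I * w * x) * ψ' x := by
      rw [show (deriv u) = fun x : ℝ =>
          (I * (w:ℂ)) * (Complex.exp (I * w * x) * ψ x)
            + Complex.exp (I * w * x) * ψ' x from funext fun x => by
        rw [hderivu x]; ring]
      rw [integral_add (hint1.const_mul _) hint2, integral_const_mul]
    rw [hsplit] at hzero
    linear_combination hzero
  -- Step B : translation trick
  have hE : ∀ x : ℝ, Complex.exp (I * w * ((x + h : ℝ) : ℂ))
      = - Complex.exp (I * w * x) := by
    intro x
    have hwhC : (w : ℂ) * (h : ℂ) = (Real.pi : ℂ) := by rw [← Complex.ofReal_mul, hwh]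
    have : I * (w:ℂ) * ((x + h : ℝ) : ℂ) = I * w * x + (Real.pi : ℂ) * I := by
      push_cast
      rw [← hwhC]; ring
    rw [this, Complex.exp_add, Complex.exp_pi_mul_I]; ring
  have keyB : ∫ x : ℝ, Complex.exp (I * w * x) * ψ' (x + h)
      = - ∫ x : ℝ, Complex.exp (I * w * x) * ψ' x := by
    have htr := integral_add_right_eq_self (μ := volume)
      (fun x : ℝ => Complex.exp (I * w * x) * ψ' x) h
    calc ∫ x : ℝ, Complex.exp (I * w * x) * ψ' (x + h)
        = - ∫ x : ℝ, Complex.exp (I * w * ((x + h : ℝ) : ℂ)) * ψ' (x + h) := by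
          rw [← integral_neg]
          congr 1 with x
          rw [hE x]; ring
      _ = - ∫ x : ℝ, Complex.exp (I * w * x) * ψ' x := by rw [htr]
  have keyB2 : (2:ℂ) * ∫ x : ℝ, Complex.exp (I * w * x) * ψ' x
      = ∫ x : ℝ, Complex.exp (I * w * x) * (ψ' x - ψ' (x + h)) := by
    have : ∫ x : ℝ, Complex.exp (I * w * x) * (ψ' x - ψ' (x + h))
        = (∫ x : ℝ, Complex.exp (I * w * x) * ψ' x)
          - ∫ x : ℝ, Complex.exp (I * w * x) * ψ' (x + h) := by
      rw [← integral_sub hint2 hint3]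
      congr 1 with x; ring
    rw [this, keyB]; ring
  -- Step C : Hoelder bound on the integral
  have hbound : ∀ x : ℝ, ‖Complex.exp (I * w * x) * (ψ' x - ψ' (x + h))‖
      ≤ C * |h| ^ τ := by
    intro x
    rw [norm_mul, hne x, one_mul]
    have habs : |x - (x + h)| = |h| := by
      rw [show x - (x + h) = -h by ring, abs_neg]
    have := hC x (x + h)
    rwa [habs] at this
  set S := Metric.closedBall (0:ℝ) (R' + Real.pi) with hSdef
  have hSvanish : ∀ x ∉ S, Complex.exp (I * w * x) * (ψ' x - ψ' (x + h)) = 0 := by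
    intro x hx
    rw [hSdef, Metric.mem_closedBall, Real.dist_eq, sub_zero, not_le] at hx
    have h1 : ψ' x = 0 := by
      apply image_eq_zero_of_notMem_tsupport
      intro hmem
      have := hR' hmem
      rw [Metric.mem_closedBall, Real.dist_eq, sub_zero] at this
      linarith [Real.pi_pos]
    have h2 : ψ' (x + h) = 0 := by
      apply image_eq_zero_of_notMem_tsupport
      intro hmem
      have hm := hR' hmem
      rw [Metric.mem_closedBall, Real.dist_eq, sub_zero] at hm
      have : |x| ≤ |x + h| + |h| := by
        calc |x| = |(x + h) + (-h)| := by ring_nf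
          _ ≤ |x + h| + |(-h)| := abs_add_le _ _
          _ = |x + h| + |h| := by rw [abs_neg]
      linarith
    rw [h1, h2]; ring
  have hnorm2G : ‖∫ x : ℝ, Complex.exp (I * w * x) * (ψ' x - ψ' (x + h))‖
      ≤ C * |h| ^ τ * (2 * (R' + Real.pi)) := by
    rw [← setIntegral_eq_integral_of_forall_compl_eq_zero hSvanish]
    have hfin : volume S < ⊤ := by
      rw [hSdef, Real.volume_closedBall]; exact ENNReal.ofReal_lt_top
    have hm : AEStronglyMeasurable (fun x : ℝ => Complex.exp (I * w * x) * (ψ' x - ψ' (x + h)))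
        (volume.restrict S) :=
      ((hec.mul (hcont'.sub hconth))).aestronglyMeasurable.restrict
    have := norm_setIntegral_le_of_norm_le_const (μ := volume) (s := S)
      hfin (fun x _ => hbound x)
    calc ‖∫ x in S, Complex.exp (I * w * x) * (ψ' x - ψ' (x + h))‖
        ≤ C * |h| ^ τ * (volume S).toReal := this
      _ = C * |h| ^ τ * (2 * (R' + Real.pi)) := by
          rw [hSdef, Real.volume_closedBall, ENNReal.toReal_ofReal (by positivity)]
  -- combine
  have hGle : ‖∫ x : ℝ, Complex.exp (I * w * x) * ψ' x‖
      ≤ C * |h| ^ τ * (R' + Real.pi) := by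
    have h2 : ‖(2:ℂ) * ∫ x : ℝ, Complex.exp (I * w * x) * ψ' x‖
        = 2 * ‖∫ x : ℝ, Complex.exp (I * w * x) * ψ' x‖ := by
      rw [norm_mul]; norm_num
    rw [keyB2] at h2
    linarith [hnorm2G, h2.symm.le, h2.le]
  have hFeq : |w| * ‖∫ x : ℝ, Complex.exp (I * w * x) * ψ x‖
      = ‖∫ x : ℝ, Complex.exp (I * w * x) * ψ' x‖ := by
    have : ‖(I * (w:ℂ)) * ∫ x : ℝ, Complex.exp (I * w * x) * ψ x‖
        = ‖- ∫ x : ℝ, Complex.exp (I * w * x) * ψ' x‖ := by rw [keyA]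
    rwa [norm_mul, norm_neg, norm_mul, Complex.norm_I, one_mul, Complex.norm_real,
      Real.norm_eq_abs] at this
  have hhpow : |h| ^ τ = Real.pi ^ τ / |w| ^ τ := by
    rw [hhabs, Real.div_rpow Real.pi_pos.le hw1.le]
  have hwpow : |w| ^ (1 + τ) = |w| * |w| ^ τ := by
    rw [Real.rpow_add hw1, Real.rpow_one]
  have hwτ : (0:ℝ) < |w| ^ τ := Real.rpow_pos_of_pos hw1 τ
  show ‖∫ x : ℝ, Complex.exp (I * w * x) * ψ x‖
      ≤ C * (R' + Real.pi) * Real.pi ^ τ / |w| ^ (1 + τ)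
  rw [hwpow, le_div_iff₀ (by positivity)]
  have harr : ‖∫ x : ℝ, Complex.exp (I * w * x) * ψ x‖ * (|w| * |w| ^ τ)
      = (|w| * ‖∫ x : ℝ, Complex.exp (I * w * x) * ψ x‖) * |w| ^ τ := by ring
  rw [harr, hFeq]
  calc ‖∫ x : ℝ, Complex.exp (I * w * x) * ψ' x‖ * |w| ^ τ
      ≤ (C * |h| ^ τ * (R' + Real.pi)) * |w| ^ τ :=
        mul_le_mul_of_nonneg_right hGle hwτ.le
    _ = C * (R' + Real.pi) * Real.pi ^ τ := by
        rw [hhpow]; field_simp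
end
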